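/- Let Γ* = (Γ*₁, Γ*₂) satisfy the steady angular profile system 2 sin(2θ)∂_θ Γ*₁ + 6Γ*₁ = Γ*₂ and 2 sin(2θ)∂_θ Γ*₂ + 9Γ*₂ = B*² cos²θ (Γ*₁ − ⨍Γ*₁) on [0,π/2], with Γ*₁ ∈ C^{3/2}([0,π/2]) and Γ*₂ ∈ C²([0,π/2]), ⨍Γ*₁ = 2, and B*² = 130. Define G*₁ = z/(1+z)² Γ*₁(θ), G*₂ = −(2B*)^{-1} z/(1+z)² Γ*₂(θ), P*₀ = B*/(1+z). Then (G*₁, G*₂, P*₀) satisfy the self-similar profile system: G₁ + z∂_z G₁ + (1/2)L(G₁) sin(2θ)∂_θ G₁ + L(G₁)G₁ = −2P₀G₂; G₂ + z∂_z G₂ + (1/2)L(G₁) sin(2θ)∂_θ G₂ + (7/4)L(G₁)G₂ = −(1/2)cos²θ P₀ (G₁ − ⨍G₁); P₀ + z∂_z P₀ = (1/4)L(G₁)P₀. -/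

import Mathlib

open Real Set MeasureTheory

noncomputable section

/-- `L(G)(z) = 2∫_z^∞ (1/z') ⨍G(z',·) dz'` with `⨍` the angular average over `[0,π/2]`. -/
def Lprof (G : ℝ → ℝ → ℝ) (z : ℝ) : ℝ :=
  2 * ∫ z' in Ioi z, (1/z') * ((2/π) * ∫ θ in (0:ℝ)..(π/2), G z' θ)

lemma aux_hasDerivAt_frac {z : ℝ} (hz : (1:ℝ) + z ≠ 0) :
    HasDerivAt (fun w : ℝ => w/(1+w)^2) ((1-z)/(1+z)^3) z := by
  have h : HasDerivAt (fun w : ℝ => (1+w)^2) (2*(1+z)) z := by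
    have h0 : HasDerivAt (fun w : ℝ => 1+w) 1 z := by
      simpa using (hasDerivAt_id z).const_add 1
    have := h0.fun_pow 2
    simpa [mul_comm] using this
  have := (hasDerivAt_id z).fun_div h (pow_ne_zero 2 hz)
  refine this.congr_deriv ?_
  simp only [id]
  field_simp
  ring

lemma aux_hasDerivAt_P {Bs z : ℝ} (hz : (1:ℝ) + z ≠ 0) :
    HasDerivAt (fun w : ℝ => Bs/(1+w)) (-Bs/(1+z)^2) z := by
  have h0 : HasDerivAt (fun w : ℝ => 1+w) 1 z := by
    simpa using (hasDerivAt_id z).const_add 1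
  have := (hasDerivAt_const z Bs).fun_div h0 hz
  refine this.congr_deriv ?_
  field_simp
  ring

lemma aux_integral (z : ℝ) (hz : 0 < z) :
    ∫ w in Ioi z, 2/(1+w)^2 = 2/(1+z) := by
  have key : ∫ w in Ioi z, 2/(1+w)^2 = 0 - (-2/(1+z)) := by
    apply integral_Ioi_of_hasDerivAt_of_nonneg'
      (g := fun w => -2/(1+w)) (g' := fun w => 2/(1+w)^2)
    · intro x hx
      have hx1 : (1:ℝ) + x ≠ 0 := by
        have : (0:ℝ) < 1 + x := by nlinarith [mem_Ici.1 hx]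
        linarith
      have := aux_hasDerivAt_P (Bs := (-2:ℝ)) hx1
      convert this using 1
      field_simp
    · intro x hx
      have : (0:ℝ) < 1 + x := by nlinarith [mem_Ioi.1 hx]
      positivity
    · have h1 : Filter.Tendsto (fun w : ℝ => 1 + w) Filter.atTop Filter.atTop :=
        Filter.tendsto_atTop_add_const_left _ 1 Filter.tendsto_id
      simpa [div_eq_mul_inv] using (h1.inv_tendsto_atTop).const_mul (-2 : ℝ)
  rw [key]; ring

lemma aux_Lprof (Γ₁ : ℝ → ℝ) (hint : (∫ θ in (0:ℝ)..(π/2), Γ₁ θ) = π)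
    (z : ℝ) (hz : 0 < z) :
    Lprof (fun w φ => w/(1+w)^2 * Γ₁ φ) z = 4/(1+z) := by
  have h1z : (1:ℝ) + z ≠ 0 := by linarith
  have hπ : (π:ℝ) ≠ 0 := Real.pi_ne_zero
  have hcong : ∀ w ∈ Ioi z,
      (1/w) * ((2/π) * ∫ θ in (0:ℝ)..(π/2), w/(1+w)^2 * Γ₁ θ) = 2/(1+w)^2 := by
    intro w hw
    have hwpos : 0 < w := lt_trans hz (mem_Ioi.1 hw)
    have hw0 : w ≠ 0 := ne_of_gt hwpos
    have h1w : (1:ℝ) + w ≠ 0 := by linarith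
    rw [intervalIntegral.integral_const_mul, hint]
    field_simp
  rw [Lprof, setIntegral_congr_fun measurableSet_Ioi hcong, aux_integral z hz]
  field_simp
  ring

theorem stmt13 (Γ₁ Γ₂ : ℝ → ℝ) (Bs : ℝ) (hBsq : Bs^2 = 130) (hBpos : 0 < Bs)
    (hΓ₁reg : ContDiffOn ℝ 1 Γ₁ (Icc 0 (π/2)))
    (hΓ₁hold : ∃ C : NNReal, HolderOnWith C (1/2 : NNReal) (deriv Γ₁) (Icc 0 (π/2)))
    (hΓ₂reg : ContDiffOn ℝ 2 Γ₂ (Icc 0 (π/2)))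
    (havg : (2/π) * (∫ θ in (0:ℝ)..(π/2), Γ₁ θ) = 2)
    (heq1 : ∀ θ ∈ Icc (0:ℝ) (π/2),
      2 * Real.sin (2*θ) * deriv Γ₁ θ + 6 * Γ₁ θ = Γ₂ θ)
    (heq2 : ∀ θ ∈ Icc (0:ℝ) (π/2),
      2 * Real.sin (2*θ) * deriv Γ₂ θ + 9 * Γ₂ θ
        = Bs^2 * (Real.cos θ)^2 * (Γ₁ θ - (2/π) * ∫ φ in (0:ℝ)..(π/2), Γ₁ φ)) :
    ∀ z ∈ Ioi (0:ℝ), ∀ θ ∈ Icc (0:ℝ) (π/2),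
      -- notation: G₁, G₂, P₀
      (fun (G₁ G₂ : ℝ → ℝ → ℝ) (Pz : ℝ → ℝ) =>
        (G₁ z θ + z * deriv (fun w => G₁ w θ) z
            + (1/2) * Lprof G₁ z * (Real.sin (2*θ) * deriv (fun φ => G₁ z φ) θ)
            + Lprof G₁ z * G₁ z θ
          = -2 * Pz z * G₂ z θ)
        ∧ (G₂ z θ + z * deriv (fun w => G₂ w θ) z
            + (1/2) * Lprof G₁ z * (Real.sin (2*θ) * deriv (fun φ => G₂ z φ) θ)
            + (7/4) * Lprof G₁ z * G₂ z θ
          = -(1/2) * (Real.cos θ)^2 * Pz z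
              * (G₁ z θ - (2/π) * ∫ φ in (0:ℝ)..(π/2), G₁ z φ))
        ∧ (Pz z + z * deriv Pz z = (1/4) * Lprof G₁ z * Pz z))
      (fun w φ => w/(1+w)^2 * Γ₁ φ)
      (fun w φ => -(1/(2*Bs)) * (w/(1+w)^2) * Γ₂ φ)
      (fun w => Bs/(1+w)) := by
  intro z hz θ hθ
  have hz0 : 0 < z := mem_Ioi.1 hz
  have h1z : (1:ℝ) + z ≠ 0 := by linarith
  have hB : Bs ≠ 0 := ne_of_gt hBpos
  have hπ : (π:ℝ) ≠ 0 := Real.pi_ne_zero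
  have hint : (∫ θ in (0:ℝ)..(π/2), Γ₁ θ) = π := by
    have := havg
    field_simp at this
    linarith
  have hL : Lprof (fun w φ => w/(1+w)^2 * Γ₁ φ) z = 4/(1+z) := aux_Lprof Γ₁ hint z hz0
  have hd1 : deriv (fun w => w/(1+w)^2 * Γ₁ θ) z = (1-z)/(1+z)^3 * Γ₁ θ :=
    ((aux_hasDerivAt_frac h1z).mul_const _).deriv
  have hd2 : deriv (fun w => -(1/(2*Bs)) * (w/(1+w)^2) * Γ₂ θ) z
      = -(1/(2*Bs)) * ((1-z)/(1+z)^3) * Γ₂ θ :=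
    (((aux_hasDerivAt_frac h1z).const_mul (-(1/(2*Bs)))).mul_const (Γ₂ θ)).deriv
  have hdP : deriv (fun w => Bs/(1+w)) z = -Bs/(1+z)^2 := (aux_hasDerivAt_P h1z).deriv
  have hdθ1 : deriv (fun φ => z/(1+z)^2 * Γ₁ φ) θ = z/(1+z)^2 * deriv Γ₁ θ :=
    deriv_const_mul_field _
  have hdθ2 : deriv (fun φ => -(1/(2*Bs)) * (z/(1+z)^2) * Γ₂ φ) θ
      = -(1/(2*Bs)) * (z/(1+z)^2) * deriv Γ₂ θ := deriv_const_mul_field _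
  have hintz : (2/π) * (∫ φ in (0:ℝ)..(π/2), z/(1+z)^2 * Γ₁ φ) = z/(1+z)^2 * 2 := by
    rw [intervalIntegral.integral_const_mul, hint]
    field_simp
  have h1 := heq1 θ hθ
  have h2 := heq2 θ hθ
  rw [havg] at h2
  refine ⟨?_, ?_, ?_⟩
  · show _ = _
    simp only [hL, hd1, hdθ1]
    rw [← h1]
    field_simp
    ring
  · show _ = _
    simp only [hL, hd2, hdθ2, hintz]
    refine Eq.trans (b := -(z/(2*Bs*(1+z)^3))
        * (2 * Real.sin (2*θ) * deriv Γ₂ θ + 9 * Γ₂ θ)) (by field_simp; ring) ?_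
    rw [h2]
    field_simp
  · show _ = _
    simp only [hL, hdP]
    field_simp
    ring

end
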